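/- With f as above, the directed graph on Fin (2p) with edge set {(v, f(v)) : v ∈ Fin (2p)} is strongly connected if and only if the parity of x is odd. -/

import Mathlib

set_option maxHeartbeats 4000000

private lemma rtg_iterate {α : Type*} (f : α → α) {u v : α} :
    Relation.ReflTransGen (fun a b => f a = b) u v ↔ ∃ k, f^[k] u = v := by
  constructor
  · intro h
    induction h with
    | refl => exact ⟨0, rfl⟩
    | tail _ hbc ih =>
        obtain ⟨k, hk⟩ := ih
        exact ⟨k + 1, by rw [Function.iterate_succ_apply', hk]; exact hbc⟩
  · rintro ⟨k, rfl⟩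
    induction k with
    | zero => exact Relation.ReflTransGen.refl
    | succ k ih =>
        rw [Function.iterate_succ_apply']
        exact ih.tail rfl

private lemma shift_sum (p : ℕ) (hp : 1 ≤ p) (x : Fin p → Bool) (m : ℕ) :
    ∑ j ∈ Finset.range p, (x ⟨(m + j) % p, Nat.mod_lt _ (by omega)⟩).toNat
      = ∑ i, (x i).toNat := by
  obtain ⟨q, rfl⟩ : ∃ q, p = q + 1 := ⟨p - 1, by omega⟩
  rw [← Fin.sum_univ_eq_sum_range
    (fun j => (x ⟨(m + j) % (q + 1), Nat.mod_lt _ (by omega)⟩).toNat) (q + 1)]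
  refine Fintype.sum_equiv (Equiv.addLeft (⟨m % (q + 1), Nat.mod_lt _ (by omega)⟩ : Fin (q + 1)))
    _ _ (fun i => ?_)
  congr 1
  apply congrArg
  apply Fin.ext
  simp [Fin.val_add, Nat.mod_add_mod]

private lemma period_sum (p : ℕ) (hp : 1 ≤ p) (x : Fin p → Bool) (q m : ℕ) :
    ∑ j ∈ Finset.range (q * p), (x ⟨(m + j) % p, Nat.mod_lt _ (by omega)⟩).toNat
      = q * ∑ i, (x i).toNat := by
  induction q with
  | zero => simp
  | succ q ih =>
    rw [show (q + 1) * p = q * p + p from by ring, Finset.sum_range_add, ih]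
    have h2 : ∑ j ∈ Finset.range p,
        (x ⟨(m + (q * p + j)) % p, Nat.mod_lt _ (by omega)⟩).toNat
        = ∑ i, (x i).toNat := by
      rw [← shift_sum p hp x (m + q * p)]
      exact Finset.sum_congr rfl fun j _ =>
        congrArg (fun t : Fin p => (x t).toNat) (Fin.ext (congrArg (· % p) (by omega)))
    rw [h2]; ring

private lemma iter_formula (p : ℕ) (hp : 1 ≤ p) (x : Fin p → Bool)
    (f : Fin (2 * p) → Fin (2 * p))
    (hf : ∀ i : Fin p,
      f ⟨2 * i.val, by have := i.isLt; omega⟩ =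
        ⟨(2 * i.val + 2 + (x i).toNat) % (2 * p), Nat.mod_lt _ (by have := hp; omega)⟩ ∧
      f ⟨2 * i.val + 1, by have := i.isLt; omega⟩ =
        ⟨(2 * i.val + 3 - (x i).toNat) % (2 * p), Nat.mod_lt _ (by have := hp; omega)⟩)
    (k i b : ℕ) :
    f^[k] ⟨2 * (i % p) + b % 2,
        by have h1 := Nat.mod_lt i (show 0 < p by omega)
           have h2 := Nat.mod_lt b (show 0 < 2 by omega); omega⟩
      = ⟨2 * ((i + k) % p)
          + (b + ∑ j ∈ Finset.range k, (x ⟨(i + j) % p, Nat.mod_lt _ (by omega)⟩).toNat) % 2,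
        by have h1 := Nat.mod_lt (i + k) (show 0 < p by omega)
           have h2 := Nat.mod_lt (b + ∑ j ∈ Finset.range k,
             (x ⟨(i + j) % p, Nat.mod_lt _ (by omega)⟩).toNat) (show 0 < 2 by omega); omega⟩ := by
  have step : ∀ (i b : ℕ),
      f ⟨2 * (i % p) + b % 2,
          by have h1 := Nat.mod_lt i (show 0 < p by omega)
             have h2 := Nat.mod_lt b (show 0 < 2 by omega); omega⟩
        = ⟨2 * ((i + 1) % p) + (b + (x ⟨i % p, Nat.mod_lt _ (by omega)⟩).toNat) % 2,
          by have h1 := Nat.mod_lt (i + 1) (show 0 < p by omega)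
             have h2 := Nat.mod_lt (b + (x ⟨i % p, Nat.mod_lt _ (by omega)⟩).toNat)
               (show 0 < 2 by omega); omega⟩ := by
    intro i b
    have hi' : i % p < p := Nat.mod_lt _ (by omega)
    have hc1 : (x ⟨i % p, hi'⟩).toNat ≤ 1 := Bool.toNat_le _
    have hmod : ∀ a t : ℕ, t < 2 → a = 2 * (i % p + 1) + t →
        a % (2 * p) = 2 * ((i % p + 1) % p) + t := by
      intro a t ht ha
      rcases Nat.lt_or_ge (i % p + 1) p with h | h
      · rw [Nat.mod_eq_of_lt (by omega), Nat.mod_eq_of_lt (by omega)]; exact ha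
      · have hip : i % p + 1 = p := by omega
        rw [hip, Nat.mod_self, show a = 2 * p + t from by omega, Nat.add_mod_left,
          Nat.mod_eq_of_lt (by omega)]
        omega
    have hmodp : (i + 1) % p = (i % p + 1) % p := (Nat.mod_add_mod i p 1).symm
    have hmod2 : (b + (x ⟨i % p, hi'⟩).toNat) % 2
        = (b % 2 + (x ⟨i % p, hi'⟩).toNat) % 2 :=
      (Nat.mod_add_mod b 2 _).symm
    rcases Nat.mod_two_eq_zero_or_one b with hb | hb
    · have key := (hf ⟨i % p, hi'⟩).1
      have harg : (⟨2 * (i % p) + b % 2, by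
          have h1 := Nat.mod_lt i (show 0 < p by omega)
          have h2 := Nat.mod_lt b (show 0 < 2 by omega); omega⟩ : Fin (2 * p))
          = ⟨2 * (i % p), by omega⟩ := Fin.ext (by simp [hb])
      rw [harg, key]
      apply Fin.ext
      show (2 * (i % p) + 2 + (x ⟨i % p, hi'⟩).toNat) % (2 * p)
        = 2 * ((i + 1) % p) + (b + (x ⟨i % p, hi'⟩).toNat) % 2
      rw [hmodp, hmod2, hb]
      rw [Nat.zero_add, Nat.mod_eq_of_lt (show (x ⟨i % p, hi'⟩).toNat < 2 by omega)]
      exact hmod _ _ (by omega) (by omega)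
    · have key := (hf ⟨i % p, hi'⟩).2
      have harg : (⟨2 * (i % p) + b % 2, by
          have h1 := Nat.mod_lt i (show 0 < p by omega)
          have h2 := Nat.mod_lt b (show 0 < 2 by omega); omega⟩ : Fin (2 * p))
          = ⟨2 * (i % p) + 1, by omega⟩ := Fin.ext (by simp [hb])
      rw [harg, key]
      apply Fin.ext
      show (2 * (i % p) + 3 - (x ⟨i % p, hi'⟩).toNat) % (2 * p)
        = 2 * ((i + 1) % p) + (b + (x ⟨i % p, hi'⟩).toNat) % 2
      rw [hmodp, hmod2, hb]
      rcases Nat.le_one_iff_eq_zero_or_eq_one.mp hc1 with hc | hc <;> rw [hc]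
      · exact hmod _ _ (by omega) (by omega)
      · exact hmod _ _ (by omega) (by omega)
  induction k generalizing i b with
  | zero =>
    apply Fin.ext
    simp
  | succ k ih =>
    rw [Function.iterate_succ_apply, step i b,
      ih (i + 1) (b + (x ⟨i % p, Nat.mod_lt _ (by omega)⟩).toNat)]
    apply Fin.ext
    show 2 * ((i + 1 + k) % p)
        + ((b + (x ⟨i % p, Nat.mod_lt _ (by omega)⟩).toNat) + ∑ j ∈ Finset.range k,
            (x ⟨(i + 1 + j) % p, Nat.mod_lt _ (by omega)⟩).toNat) % 2
      = 2 * ((i + (k + 1)) % p)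
        + (b + ∑ j ∈ Finset.range (k + 1),
            (x ⟨(i + j) % p, Nat.mod_lt _ (by omega)⟩).toNat) % 2
    have hidx : (i + 1 + k) % p = (i + (k + 1)) % p := by
      rw [show i + 1 + k = i + (k + 1) from by omega]
    have hsum : ∑ j ∈ Finset.range (k + 1),
        (x ⟨(i + j) % p, Nat.mod_lt _ (by omega)⟩).toNat
        = (∑ j ∈ Finset.range k,
            (x ⟨(i + 1 + j) % p, Nat.mod_lt _ (by omega)⟩).toNat)
          + (x ⟨i % p, Nat.mod_lt _ (by omega)⟩).toNat := by
      rw [Finset.sum_range_succ']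
      congr 1
      exact Finset.sum_congr rfl fun j _ =>
        congrArg (fun t : Fin p => (x t).toNat) (Fin.ext (congrArg (· % p) (by omega)))
    rw [hidx, hsum]
    omega

/-- The functional directed graph of `f(2i) = 2i + 2 + x_i`,
`f(2i+1) = 2i + 3 - x_i` (mod `2p`) is strongly connected iff the parity of
the bit string `x` is odd. -/
theorem parity_graph_strongly_connected_iff (p : ℕ) (hp : 1 ≤ p)
    (x : Fin p → Bool) (f : Fin (2 * p) → Fin (2 * p))
    (hf : ∀ i : Fin p,
      f ⟨2 * i.val, by omega⟩ =
        ⟨(2 * i.val + 2 + (x i).toNat) % (2 * p), Nat.mod_lt _ (by omega)⟩ ∧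
      f ⟨2 * i.val + 1, by omega⟩ =
        ⟨(2 * i.val + 3 - (x i).toNat) % (2 * p), Nat.mod_lt _ (by omega)⟩) :
    (∀ u v : Fin (2 * p), Relation.ReflTransGen (fun a b => f a = b) u v) ↔
      (∑ i, (x i).toNat) % 2 = 1 := by
  constructor
  · intro hreach
    by_contra hS
    have hS0 : (∑ i, (x i).toNat) % 2 = 0 := by omega
    have h01 := hreach ⟨0, by omega⟩ ⟨1, by omega⟩
    rw [rtg_iterate] at h01
    obtain ⟨k, hk⟩ := h01
    have key := iter_formula p hp x f hf k 0 0
    have e0 : (⟨0, (by omega : (0:ℕ) < 2 * p)⟩ : Fin (2 * p))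
        = ⟨2 * (0 % p) + 0 % 2, by
            have h1 := Nat.mod_lt 0 (show 0 < p by omega); omega⟩ := Fin.ext (by simp)
    rw [← e0, hk, Fin.mk.injEq] at key
    have hv := key
    have hq : k % p = 0 := by
      have h1 : (0 + k) % p = k % p := by rw [Nat.zero_add]
      omega
    obtain ⟨q, rfl⟩ := Nat.dvd_of_mod_eq_zero hq
    rw [show p * q = q * p from by ring] at hv
    rw [period_sum p hp x q 0] at hv
    have h0 : (q * ∑ i, (x i).toNat) % 2 = 0 := by rw [Nat.mul_mod, hS0]; simp
    have h2 : (0 + q * p) % p = 0 := by rw [Nat.zero_add]; exact Nat.mul_mod_left q p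
    omega
  · intro hS u v
    rw [rtg_iterate]
    have hu2 : u.val < 2 * p := u.isLt
    have hv2 : v.val < 2 * p := v.isLt
    have hu : u = ⟨2 * ((u.val / 2) % p) + (u.val % 2) % 2, by
        have h1 := Nat.mod_lt (u.val / 2) (show 0 < p by omega)
        have h2 := Nat.mod_lt (u.val % 2) (show 0 < 2 by omega); omega⟩ := by
      apply Fin.ext
      show u.val = 2 * ((u.val / 2) % p) + (u.val % 2) % 2
      rw [Nat.mod_eq_of_lt (show u.val / 2 < p by omega)]
      omega
    have hpos : (u.val / 2 + (p + v.val / 2 - u.val / 2)) % p = v.val / 2 := by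
      rw [show u.val / 2 + (p + v.val / 2 - u.val / 2) = p + v.val / 2 from by omega,
        Nat.add_mod_left, Nat.mod_eq_of_lt (by omega)]
    have hpos2 : (u.val / 2 + ((p + v.val / 2 - u.val / 2) + p)) % p = v.val / 2 := by
      rw [show u.val / 2 + ((p + v.val / 2 - u.val / 2) + p) = p + (p + v.val / 2) from by omega,
        Nat.add_mod_left, Nat.add_mod_left, Nat.mod_eq_of_lt (by omega)]
    have hsum2 : ∑ j ∈ Finset.range ((p + v.val / 2 - u.val / 2) + p),
        (x ⟨(u.val / 2 + j) % p, Nat.mod_lt _ (by omega)⟩).toNat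
        = (∑ j ∈ Finset.range (p + v.val / 2 - u.val / 2),
            (x ⟨(u.val / 2 + j) % p, Nat.mod_lt _ (by omega)⟩).toNat)
          + ∑ i, (x i).toNat := by
      rw [Finset.sum_range_add]
      congr 1
      rw [← shift_sum p hp x (u.val / 2 + (p + v.val / 2 - u.val / 2))]
      exact Finset.sum_congr rfl fun j _ =>
        congrArg (fun t : Fin p => (x t).toNat) (Fin.ext (congrArg (· % p) (by omega)))
    by_cases hpar : (u.val % 2 + ∑ j ∈ Finset.range (p + v.val / 2 - u.val / 2),
        (x ⟨(u.val / 2 + j) % p, Nat.mod_lt _ (by omega)⟩).toNat) % 2 = v.val % 2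
    · refine ⟨p + v.val / 2 - u.val / 2,
        (congrArg (f^[p + v.val / 2 - u.val / 2]) hu).trans
          ((iter_formula p hp x f hf (p + v.val / 2 - u.val / 2) (u.val / 2)
            (u.val % 2)).trans (Fin.ext ?_))⟩
      simp only [Fin.val_mk]
      rw [hpos]
      have := v.isLt
      omega
    · refine ⟨(p + v.val / 2 - u.val / 2) + p,
        (congrArg (f^[(p + v.val / 2 - u.val / 2) + p]) hu).trans
          ((iter_formula p hp x f hf ((p + v.val / 2 - u.val / 2) + p) (u.val / 2)
            (u.val % 2)).trans (Fin.ext ?_))⟩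
      simp only [Fin.val_mk]
      rw [hpos2, hsum2]
      have := v.isLt
      omega
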